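/- arXiv:math/0602411 — 2 statements merged into one kernel-verified Lean document; each statement's English description precedes it below -/
import Mathlib

section
/- Every HR-module is isomorphic, as an HR-datum, to a finite direct sum of elementary HR-modules A_m. -/
open scoped TensorProduct

/-- The raw data of an HR-datum: a ℤ-grading by submodules, a ℂ-valued bilinear
intersection form, and a Lefschetz operator. -/
structure HRData (W : Type*) [AddCommGroup W] [Module ℝ W] where
  grading : ℤ → Submodule ℝ W
  form : W →ₗ[ℝ] W →ₗ[ℝ] ℂ
  lef : W →ₗ[ℝ] W

variable {W : Type*} [AddCommGroup W] [Module ℝ W]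

/-- The axioms of an HR-datum: `W` is a finite-dimensional real vector space, internally
graded in a bounded range of degrees; the intersection form is symmetric, nondegenerate,
of total degree `0` and satisfies `⟨W^{−k}, W^k⟩ ⊆ i^k·ℝ`; the Lefschetz operator has
degree `2` (in particular it kills the top degree) and is self-adjoint for the form. -/
def HRData.IsHRDatum (h : HRData W) : Prop :=
  FiniteDimensional ℝ W ∧
  DirectSum.IsInternal h.grading ∧
  (∃ m : ℕ, ∀ k : ℤ, (m : ℤ) < |k| → h.grading k = ⊥) ∧
  (∀ x y, h.form x y = h.form y x) ∧
  (∀ x, (∀ y, h.form x y = 0) → x = 0) ∧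
  (∀ j k : ℤ, j + k ≠ 0 → ∀ x ∈ h.grading j, ∀ y ∈ h.grading k, h.form x y = 0) ∧
  (∀ k : ℤ, ∀ x ∈ h.grading (-k), ∀ y ∈ h.grading k,
      ∃ r : ℝ, h.form x y = Complex.I ^ k * (r : ℂ)) ∧
  (∀ k : ℤ, ∀ x ∈ h.grading k, h.lef x ∈ h.grading (k + 2)) ∧
  (∀ x y, h.form (h.lef x) y = h.form x (h.lef y))

/-- An HR-module: an HR-datum such that for every `k ≥ 0` the form `i^k·s_k`, where
`s_k(x,y) = ⟨x, L^k y⟩`, is (real-valued and) positive definite on the primitive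
subspace `P(W^{−k}) = ker (L^{k+1} : W^{−k} → W^{k+2})`. -/
def HRData.IsHRModule (h : HRData W) : Prop :=
  h.IsHRDatum ∧
  ∀ k : ℕ, ∀ x ∈ h.grading (-(k : ℤ)), (h.lef ^ (k + 1)) x = 0 → x ≠ 0 →
    ∃ r : ℝ, 0 < r ∧ Complex.I ^ (k : ℕ) * h.form x ((h.lef ^ k) x) = (r : ℂ)

/-- `U` is an "elementary" HR-submodule of type `A_m`: it is spanned by linearly
independent homogeneous vectors `e_j` of degrees `−m, −m+2, …, m` on which the Lefschetz
operator acts by `L e_j = e_{j+1}` (and `L e_m = 0`) and whose intersection numbers are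
`⟨e_j, e_{j'}⟩ = (−i)^m` for `j + j' = m` and `0` otherwise. -/
def HRData.IsElementarySub (h : HRData W) (m : ℕ) (U : Submodule ℝ W) : Prop :=
  ∃ e : Fin (m + 1) → W,
    LinearIndependent ℝ e ∧
    U = Submodule.span ℝ (Set.range e) ∧
    (∀ j : Fin (m + 1), e j ∈ h.grading (2 * (j : ℤ) - m)) ∧
    (∀ j : Fin (m + 1), h.lef (e j) =
      if hj : (j : ℕ) + 1 < m + 1 then e ⟨(j : ℕ) + 1, hj⟩ else 0) ∧
    (∀ j j' : Fin (m + 1), h.form (e j) (e j') =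
      if (j : ℕ) + (j' : ℕ) = m then (-Complex.I) ^ m else 0)

/-- The HR-datum `h` is (isomorphic to) the elementary HR-module `A_m`. -/
def HRData.IsElementary (h : HRData W) (m : ℕ) : Prop :=
  h.IsHRDatum ∧ h.IsElementarySub m ⊤


section HRHelpers

variable {W : Type*} [AddCommGroup W] [Module ℝ W]

private lemma HR.pow_mem (h : HRData W) {V : ℤ → Submodule ℝ W}
    (hV : ∀ d, ∀ x ∈ V d, h.lef x ∈ V (d + 2)) :
    ∀ (j : ℕ) {d : ℤ} {x : W}, x ∈ V d → (h.lef ^ j) x ∈ V (d + 2 * (j : ℤ)) := by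
  intro j
  induction j with
  | zero => intro d x hx; simpa using hx
  | succ j ih =>
    intro d x hx
    have h1 : (h.lef ^ j) (h.lef x) ∈ V ((d + 2) + 2 * (j : ℤ)) := ih (hV d x hx)
    have h2 : (h.lef ^ (j + 1)) x = (h.lef ^ j) (h.lef x) := by
      rw [pow_succ, Module.End.mul_apply]
    rw [h2, show d + 2 * ((j : ℕ) + 1 : ℕ) = (d + 2) + 2 * (j : ℤ) by push_cast; ring]
    exact h1

private lemma HR.form_pow (h : HRData W)
    (hadj : ∀ x y, h.form (h.lef x) y = h.form x (h.lef y)) :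
    ∀ (a : ℕ) (x y : W), h.form ((h.lef ^ a) x) y = h.form x ((h.lef ^ a) y) := by
  intro a
  induction a with
  | zero => intro x y; simp
  | succ a ih =>
    intro x y
    have h1 : (h.lef ^ (a + 1)) x = (h.lef ^ a) (h.lef x) := by
      rw [pow_succ, Module.End.mul_apply]
    have h2 : (h.lef ^ (a + 1)) y = h.lef ((h.lef ^ a) y) := by
      rw [pow_succ', Module.End.mul_apply]
    rw [h1, h2, ih, hadj]

end HRHelpers

section HRKey

variable {W : Type*} [AddCommGroup W] [Module ℝ W]

private lemma hr_key (h : HRData W) [FiniteDimensional ℝ W] (m0 : ℕ)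
    (hbound : ∀ k : ℤ, (m0 : ℤ) < |k| → h.grading k = ⊥)
    (hsymm : ∀ x y, h.form x y = h.form y x)
    (hdeg0 : ∀ j k : ℤ, j + k ≠ 0 → ∀ x ∈ h.grading j, ∀ y ∈ h.grading k, h.form x y = 0)
    (hreal : ∀ k : ℤ, ∀ x ∈ h.grading (-k), ∀ y ∈ h.grading k,
      ∃ r : ℝ, h.form x y = Complex.I ^ k * (r : ℂ))
    (hlefdeg : ∀ k : ℤ, ∀ x ∈ h.grading k, h.lef x ∈ h.grading (k + 2))
    (hadj : ∀ x y, h.form (h.lef x) y = h.form x (h.lef y))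
    (hpos : ∀ k : ℕ, ∀ x ∈ h.grading (-(k : ℤ)), (h.lef ^ (k + 1)) x = 0 → x ≠ 0 →
      ∃ r : ℝ, 0 < r ∧ Complex.I ^ (k : ℕ) * h.form x ((h.lef ^ k) x) = (r : ℂ)) :
    ∀ n : ℕ, ∀ V : ℤ → Submodule ℝ W,
      (∀ d, V d ≤ h.grading d) →
      (∀ d, ∀ x ∈ V d, h.lef x ∈ V (d + 2)) →
      (∀ d : ℤ, ∀ x ∈ V d, (∀ y ∈ V (-d), h.form x y = 0) → x = 0) →
      Module.finrank ℝ ↥(⨆ d, V d) ≤ n →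
      ∃ (N : ℕ) (m : Fin N → ℕ) (Us : Fin N → Submodule ℝ W),
        iSupIndep Us ∧ (⨆ i, Us i) = (⨆ d, V d) ∧
        (∀ i, h.IsElementarySub (m i) (Us i)) ∧
        (∀ i j, i ≠ j → ∀ x ∈ Us i, ∀ y ∈ Us j, h.form x y = 0) := by
  intro n
  induction n with
  | zero =>
    intro V hVgr hVlef hVnd hrk
    have hS : (⨆ d, V d) = ⊥ := Submodule.finrank_eq_zero.mp (Nat.le_zero.mp hrk)
    exact ⟨0, Fin.elim0, Fin.elim0, fun i => i.elim0,
      by rw [hS]; exact iSup_of_empty _, fun i => i.elim0, fun i => i.elim0⟩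
  | succ n IH =>
    intro V hVgr hVlef hVnd hrk
    by_cases hS : (⨆ d, V d) = ⊥
    · exact ⟨0, Fin.elim0, Fin.elim0, fun i => i.elim0,
        by rw [hS]; exact iSup_of_empty _, fun i => i.elim0, fun i => i.elim0⟩
    -- support is nonempty
    have hex : ∃ d : ℤ, V d ≠ ⊥ := by
      by_contra hc
      push_neg at hc
      exact hS (by simp [hc])
    -- symmetry of the support
    have hsymm_supp : ∀ d : ℤ, V d ≠ ⊥ → V (-d) ≠ ⊥ := by
      intro d hd hcon
      obtain ⟨z, hzV, hzne⟩ := (Submodule.ne_bot_iff _).mp hd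
      refine hzne (hVnd d z hzV fun y hy => ?_)
      rw [hcon] at hy
      rw [Submodule.mem_bot] at hy
      rw [hy, map_zero]
    -- minimal nonzero degree
    obtain ⟨dmin, hdmin_ne, hdmin_min⟩ := Int.exists_least_of_bdd
      (P := fun d => V d ≠ ⊥)
      ⟨-(m0 : ℤ), fun z hz => by
        by_contra hc
        refine hz (le_bot_iff.mp ((hVgr z).trans (hbound z ?_).le))
        rcases abs_cases z with ⟨h1, h2⟩ | ⟨h1, h2⟩ <;> omega⟩ hex
    have hdmin_nonpos : dmin ≤ 0 := by
      have := hdmin_min _ (hsymm_supp dmin hdmin_ne)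
      omega
    obtain ⟨k, hk⟩ : ∃ k : ℕ, (k : ℤ) = -dmin :=
      ⟨(-dmin).toNat, Int.toNat_of_nonneg (by omega)⟩
    -- everything above degree k vanishes
    have hVtop : ∀ d : ℤ, (k : ℤ) < d → V d = ⊥ := by
      intro d hd
      by_contra hc
      have := hdmin_min _ (hsymm_supp d hc)
      omega
    -- pick a nonzero vector in the lowest degree
    have hVk : V (-(k : ℤ)) ≠ ⊥ := by rw [show -(k : ℤ) = dmin by omega]; exact hdmin_ne
    obtain ⟨x0, hx0mem, hx0ne⟩ := (Submodule.ne_bot_iff _).mp hVk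
    have hx0prim : (h.lef ^ (k + 1)) x0 = 0 := by
      have h1 := HR.pow_mem h hVlef (k + 1) hx0mem
      rw [show -(k : ℤ) + 2 * ((k + 1 : ℕ) : ℤ) = (k : ℤ) + 2 by push_cast; ring,
        hVtop _ (by omega), Submodule.mem_bot] at h1
      exact h1
    obtain ⟨r, hrpos, hr⟩ := hpos k x0 (hVgr _ hx0mem) hx0prim hx0ne
    -- normalize
    set x : W := (Real.sqrt r)⁻¹ • x0 with hx_def
    have hs0 : (Real.sqrt r) ≠ 0 := ne_of_gt (Real.sqrt_pos.mpr hrpos)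
    have hsne : ((Real.sqrt r)⁻¹ : ℝ) ≠ 0 := inv_ne_zero hs0
    have hxmem : x ∈ V (-(k : ℤ)) := Submodule.smul_mem _ _ hx0mem
    have hxgr : x ∈ h.grading (-(k : ℤ)) := hVgr _ hxmem
    have hxne : x ≠ 0 := smul_ne_zero hsne hx0ne
    have hxprim : (h.lef ^ (k + 1)) x = 0 := by
      rw [hx_def, map_smul, hx0prim, smul_zero]
    have hIk : (Complex.I) ^ k * (-Complex.I) ^ k = 1 := by
      rw [← mul_pow, mul_neg, Complex.I_mul_I, neg_neg, one_pow]
    have hz : h.form x0 ((h.lef ^ k) x0) = (-Complex.I) ^ k * r := by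
      have h1 : (-Complex.I) ^ k * (Complex.I ^ k * h.form x0 ((h.lef ^ k) x0))
          = (-Complex.I) ^ k * r := by rw [hr]
      rwa [← mul_assoc, mul_comm ((-Complex.I) ^ k) (Complex.I ^ k), hIk, one_mul] at h1
    have hform_top : h.form x ((h.lef ^ k) x) = (-Complex.I) ^ k := by
      have h1 : (h.lef ^ k) ((Real.sqrt r)⁻¹ • x0) = (Real.sqrt r)⁻¹ • ((h.lef ^ k) x0) :=
        map_smul _ _ _
      rw [hx_def, h1, LinearMap.map_smul₂, map_smul, hz,
        smul_smul, Complex.real_smul, ← mul_inv, Real.mul_self_sqrt hrpos.le]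
      push_cast
      rw [mul_comm ((-Complex.I) ^ k) (r : ℂ), ← mul_assoc,
        inv_mul_cancel₀ (Complex.ofReal_ne_zero.mpr (ne_of_gt hrpos)), one_mul]
    -- the Gram numbers of the chain
    have gram_pow : ∀ a b : ℕ, h.form ((h.lef ^ a) x) ((h.lef ^ b) x)
        = if a + b = k then (-Complex.I) ^ k else 0 := by
      intro a b
      have hcomb : (h.lef ^ a) ((h.lef ^ b) x) = (h.lef ^ (a + b)) x := by
        rw [← Module.End.mul_apply, ← pow_add]
      rw [HR.form_pow h hadj a, hcomb]
      rcases lt_trichotomy (a + b) k with hlt | heq | hgt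
      · rw [if_neg (by omega)]
        exact hdeg0 _ _ (by push_cast; omega) x hxgr _ (HR.pow_mem h hlefdeg (a + b) hxgr)
      · rw [heq, if_pos rfl]
        exact hform_top
      · rw [if_neg (by omega)]
        have h1 : (h.lef ^ (a + b)) x = (h.lef ^ (a + b - (k + 1))) ((h.lef ^ (k + 1)) x) := by
          calc (h.lef ^ (a + b)) x = (h.lef ^ ((a + b - (k + 1)) + (k + 1))) x := by
                rw [show (a + b - (k + 1)) + (k + 1) = a + b from by omega]
            _ = (h.lef ^ (a + b - (k + 1))) ((h.lef ^ (k + 1)) x) := by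
                rw [pow_add, Module.End.mul_apply]
        rw [h1, hxprim, map_zero, map_zero]
    -- the chain
    set e : Fin (k + 1) → W := fun j => (h.lef ^ (j : ℕ)) x with he_def
    have grame : ∀ j j' : Fin (k + 1), h.form (e j) (e j')
        = if (j : ℕ) + (j' : ℕ) = k then (-Complex.I) ^ k else 0 := fun j j' => gram_pow _ _
    have he_memV : ∀ j : Fin (k + 1), e j ∈ V (2 * (j : ℤ) - k) := by
      intro j
      have h1 := HR.pow_mem h hVlef (j : ℕ) hxmem
      rwa [show -(k : ℤ) + 2 * ((j : ℕ) : ℤ) = 2 * (j : ℤ) - k by push_cast; ring] at h1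
    have he_grad : ∀ j : Fin (k + 1), e j ∈ h.grading (2 * (j : ℤ) - (k : ℤ)) :=
      fun j => hVgr _ (he_memV j)
    have he_lef : ∀ j : Fin (k + 1), h.lef (e j) =
        if hj : (j : ℕ) + 1 < k + 1 then e ⟨(j : ℕ) + 1, hj⟩ else 0 := by
      intro j
      have hstep : h.lef (e j) = (h.lef ^ ((j : ℕ) + 1)) x := by
        rw [pow_succ', Module.End.mul_apply]
      split
      · exact hstep
      · have hjk : (j : ℕ) + 1 = k + 1 := by have := j.isLt; omega
        rw [hstep, hjk, hxprim]
    have pairing_sum : ∀ (c : Fin (k + 1) → ℝ) (j1 j2 : Fin (k + 1)),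
        (j1 : ℕ) + (j2 : ℕ) = k →
        h.form (e j1) (∑ j, c j • e j) = ((c j2 : ℝ) : ℂ) * (-Complex.I) ^ k := by
      intro c j1 j2 hj12
      rw [map_sum]
      rw [Finset.sum_eq_single j2]
      · rw [map_smul, grame, if_pos hj12, Complex.real_smul]
      · intro j _ hne
        rw [map_smul, grame, if_neg (fun hc => hne (Fin.ext (by omega))), smul_zero]
      · intro habs; exact absurd (Finset.mem_univ j2) habs
    have hLI : LinearIndependent ℝ e := by
      rw [Fintype.linearIndependent_iff]
      intro g hg j0
      have h2 := pairing_sum g ⟨k - (j0 : ℕ), by omega⟩ j0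
        (by simp only [Fin.val_mk]; have := j0.isLt; omega)
      rw [hg, map_zero] at h2
      rcases mul_eq_zero.mp h2.symm with h3 | h3
      · exact Complex.ofReal_eq_zero.mp h3
      · exact absurd h3 (pow_ne_zero _ (neg_ne_zero.mpr Complex.I_ne_zero))
    -- the elementary submodule U and its orthogonal complement
    set U : Submodule ℝ W := Submodule.span ℝ (Set.range e) with hU_def
    have hU_elem : h.IsElementarySub k U := ⟨e, hLI, rfl, he_grad, he_lef, grame⟩
    set Uperp : Submodule ℝ W := ⨅ j : Fin (k + 1), LinearMap.ker (h.form (e j)) with hUperp_def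
    have mem_perp : ∀ y : W, y ∈ Uperp ↔ ∀ j, h.form (e j) y = 0 := by
      intro y
      simp [hUperp_def, Submodule.mem_iInf, LinearMap.mem_ker]
    have orth_U_perp : ∀ u ∈ U, ∀ z ∈ Uperp, h.form u z = 0 := by
      intro u hu z hz
      obtain ⟨c, hc⟩ := (Submodule.mem_span_range_iff_exists_fun ℝ).mp hu
      rw [← hc]
      have h1 : h.form (∑ j, c j • e j) z = ∑ j, c j • h.form (e j) z := by
        rw [map_sum, LinearMap.sum_apply]
        exact Finset.sum_congr rfl fun j _ => by rw [LinearMap.map_smul₂]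
      rw [h1]
      exact Finset.sum_eq_zero fun j _ => by rw [(mem_perp z).mp hz j, smul_zero]
    have hUperp_bot : U ⊓ Uperp = ⊥ := by
      rw [eq_bot_iff]
      rintro u ⟨hu, hp⟩
      obtain ⟨c, hc⟩ := (Submodule.mem_span_range_iff_exists_fun ℝ).mp hu
      have hco : ∀ j0 : Fin (k + 1), c j0 = 0 := by
        intro j0
        have h2 := pairing_sum c ⟨k - (j0 : ℕ), by omega⟩ j0
          (by simp only [Fin.val_mk]; have := j0.isLt; omega)
        rw [hc, (mem_perp u).mp hp _] at h2
        rcases mul_eq_zero.mp h2.symm with h3 | h3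
        · exact Complex.ofReal_eq_zero.mp h3
        · exact absurd h3 (pow_ne_zero _ (neg_ne_zero.mpr Complex.I_ne_zero))
      have hu0 : u = 0 := by
        rw [← hc]
        exact Finset.sum_eq_zero fun j _ => by rw [hco j, zero_smul]
      simp [hu0]
    have hperp_lef : ∀ z ∈ Uperp, h.lef z ∈ Uperp := by
      intro z hz
      rw [mem_perp]
      intro j
      rw [← hadj, he_lef j]
      split
      · exact (mem_perp z).mp hz _
      · simp
    -- the projection onto U along Uperp, degree by degree
    have proj : ∀ d : ℤ, ∀ y ∈ V d, ∃ u, u ∈ U ∧ u ∈ V d ∧ (y - u) ∈ Uperp := by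
      intro d y hy
      have hygr : y ∈ h.grading d := hVgr d hy
      by_cases hex1 : ∃ j1 : Fin (k + 1), 2 * (j1 : ℤ) - (k : ℤ) = -d
      · obtain ⟨j1, hj1⟩ := hex1
        have hj1lt : (j1 : ℕ) < k + 1 := j1.isLt
        set j2 : Fin (k + 1) := ⟨k - (j1 : ℕ), by omega⟩ with hj2_def
        have hval2 : (j2 : ℕ) = k - (j1 : ℕ) := rfl
        have hj2deg : 2 * (j2 : ℤ) - (k : ℤ) = d := by
          have : ((j2 : ℕ) : ℤ) = (k : ℤ) - (j1 : ℕ) := by rw [hval2]; omega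
          omega
        have he1 : e j1 ∈ h.grading (-d) := by rw [← hj1]; exact he_grad j1
        obtain ⟨r1, hr1⟩ := hreal d (e j1) he1 y hygr
        set c : ℝ := r1 * (-1 : ℝ) ^ (k + (j1 : ℕ)) with hc_def
        have hId : Complex.I ^ (d : ℤ) = Complex.I ^ (k : ℕ) * (-1 : ℂ) ^ (j1 : ℕ) := by
          have hdk : d = (k : ℤ) - 2 * ((j1 : ℕ) : ℤ) := by omega
          have h2 : Complex.I ^ (d : ℤ) * (-1 : ℂ) ^ (j1 : ℕ) = Complex.I ^ (k : ℕ) := by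
            calc Complex.I ^ (d : ℤ) * (-1 : ℂ) ^ (j1 : ℕ)
                = Complex.I ^ (d : ℤ) * (Complex.I ^ (2 * (j1 : ℕ) : ℕ)) := by
                  rw [pow_mul, Complex.I_sq]
              _ = Complex.I ^ (d : ℤ) * Complex.I ^ ((2 * (j1 : ℕ) : ℕ) : ℤ) := by
                  rw [zpow_natCast]
              _ = Complex.I ^ (d + (2 * (j1 : ℕ) : ℕ) : ℤ) := by
                  rw [← zpow_add₀ Complex.I_ne_zero]
              _ = Complex.I ^ ((k : ℕ) : ℤ) := by
                  congr 1
                  push_cast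
                  omega
              _ = Complex.I ^ (k : ℕ) := zpow_natCast _ _
          have h3 : ((-1 : ℂ)) ^ (j1 : ℕ) * ((-1 : ℂ)) ^ (j1 : ℕ) = 1 := by
            rw [← pow_add]
            exact Even.neg_one_pow ⟨(j1 : ℕ), rfl⟩
          calc Complex.I ^ (d : ℤ)
              = Complex.I ^ (d : ℤ) * ((-1 : ℂ) ^ (j1 : ℕ) * (-1 : ℂ) ^ (j1 : ℕ)) := by
                rw [h3, mul_one]
            _ = (Complex.I ^ (d : ℤ) * (-1 : ℂ) ^ (j1 : ℕ)) * (-1 : ℂ) ^ (j1 : ℕ) := by ring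
            _ = Complex.I ^ (k : ℕ) * (-1 : ℂ) ^ (j1 : ℕ) := by rw [h2]
        refine ⟨c • e j2, Submodule.smul_mem _ _ (Submodule.subset_span (Set.mem_range_self j2)),
          Submodule.smul_mem _ _ (by rw [← hj2deg]; exact he_memV j2), ?_⟩
        rw [mem_perp]
        intro j
        rw [map_sub, map_smul, grame]
        by_cases hj : j = j1
        · subst hj
          rw [if_pos (by omega), hr1, hId, Complex.real_smul, hc_def]
          have h5 : ((-1 : ℂ)) ^ k * ((-1 : ℂ)) ^ k = 1 := by
            rw [← pow_add]
            exact Even.neg_one_pow ⟨k, rfl⟩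
          push_cast
          rw [neg_pow Complex.I k]
          linear_combination (-((r1 : ℂ) * (-1 : ℂ) ^ (j : ℕ) * Complex.I ^ k)) * h5
        · have hjne : (j : ℕ) ≠ (j1 : ℕ) := fun hh => hj (Fin.ext hh)
          rw [if_neg (by omega), smul_zero, sub_zero]
          refine hdeg0 (2 * (j : ℤ) - (k : ℤ)) d (by omega) _ (he_grad j) y hygr
      · refine ⟨0, Submodule.zero_mem _, Submodule.zero_mem _, ?_⟩
        rw [sub_zero, mem_perp]
        intro j
        refine hdeg0 (2 * (j : ℤ) - (k : ℤ)) d (fun hc => hex1 ⟨j, by omega⟩) _ (he_grad j) y hygr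
    -- the orthogonal complement family
    set V' : ℤ → Submodule ℝ W := fun d => V d ⊓ Uperp with hV'_def
    have hV'gr : ∀ d, V' d ≤ h.grading d := fun d => inf_le_left.trans (hVgr d)
    have hV'lef : ∀ d, ∀ z ∈ V' d, h.lef z ∈ V' (d + 2) := by
      rintro d z ⟨hz1, hz2⟩
      exact ⟨hVlef d z hz1, hperp_lef z hz2⟩
    have hV'nd : ∀ d : ℤ, ∀ z ∈ V' d, (∀ y ∈ V' (-d), h.form z y = 0) → z = 0 := by
      rintro d z ⟨hzV, hzP⟩ h0
      refine hVnd d z hzV fun y hy => ?_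
      obtain ⟨u, huU, huV, hyu⟩ := proj (-d) y hy
      have h1 : h.form z (y - u) = 0 := h0 _ ⟨Submodule.sub_mem _ hy huV, hyu⟩
      have h2 : h.form z u = 0 := by rw [hsymm]; exact orth_U_perp u huU z hzP
      calc h.form z y = h.form z (y - u) + h.form z u := by rw [← map_add, sub_add_cancel]
        _ = 0 := by rw [h1, h2, add_zero]
    set S : Submodule ℝ W := ⨆ d, V d with hS_def
    set S' : Submodule ℝ W := ⨆ d, V' d with hS'_def
    have hUS : U ≤ S := by
      rw [hU_def, Submodule.span_le]
      rintro w ⟨j, rfl⟩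
      exact (le_iSup V (2 * (j : ℤ) - (k : ℤ))) (he_memV j)
    have hS'S : S' ≤ S := iSup_mono fun d => inf_le_left
    have hS'perp : S' ≤ Uperp := iSup_le fun d => inf_le_right
    have hsupUS' : U ⊔ S' = S := by
      refine le_antisymm (sup_le hUS hS'S) (iSup_le fun d => fun y hy => ?_)
      obtain ⟨u, huU, huV, hyu⟩ := proj d y hy
      rw [show y = u + (y - u) by abel]
      exact Submodule.add_mem _ (Submodule.mem_sup_left huU)
        (Submodule.mem_sup_right ((le_iSup V' d) ⟨Submodule.sub_mem _ hy huV, hyu⟩))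
    have hdisj : U ⊓ S' = ⊥ := by
      have h1 : U ⊓ S' ≤ U ⊓ Uperp := inf_le_inf_left U hS'perp
      rw [hUperp_bot] at h1
      exact le_bot_iff.mp h1
    -- rank drop
    have hxU : x ∈ U := by
      have he0 : e 0 = x := by
        show (h.lef ^ ((0 : Fin (k + 1)) : ℕ)) x = x
        simp
      exact he0 ▸ Submodule.subset_span (Set.mem_range_self 0)
    have hUne : U ≠ ⊥ := fun hc => hxne (by rw [hc] at hxU; exact Submodule.mem_bot ℝ |>.mp hxU)
    have hrank' : Module.finrank ℝ ↥S' ≤ n := by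
      have hfr := Submodule.finrank_sup_add_finrank_inf_eq U S'
      rw [hsupUS', hdisj, finrank_bot, add_zero] at hfr
      have hUpos : Module.finrank ℝ ↥U ≠ 0 := fun h0 => hUne (Submodule.finrank_eq_zero.mp h0)
      omega
    obtain ⟨N, mf, Us, hind, hUssup, helem, horth⟩ := IH V' hV'gr hV'lef hV'nd hrank'
    rw [← hS'_def] at hUssup
    -- assemble
    have hUsS' : ∀ i, Us i ≤ S' := fun i => hUssup ▸ le_iSup Us i
    refine ⟨N + 1, Fin.cons k mf, Fin.cons U Us, ?_, ?_, ?_, ?_⟩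
    · intro i
      refine Fin.cases ?_ ?_ i
      · rw [Fin.cons_zero]
        have hle : (⨆ j, ⨆ _ : j ≠ (0 : Fin (N + 1)), Fin.cons U Us j) ≤ S' := by
          refine iSup_le fun j => iSup_le fun hj => ?_
          obtain ⟨j', rfl⟩ : ∃ j', j = j'.succ := ⟨j.pred hj, (Fin.succ_pred j hj).symm⟩
          rw [Fin.cons_succ]
          exact hUsS' j'
        exact (disjoint_iff.mpr hdisj).mono_right hle
      · intro i'
        rw [Fin.cons_succ]
        have hXle : (⨆ j, ⨆ _ : j ≠ i', Us j) ≤ S' := iSup_le fun j => iSup_le fun _ => hUsS' j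
        have hcons_le : (⨆ j, ⨆ _ : j ≠ i'.succ, Fin.cons U Us j)
            ≤ U ⊔ ⨆ j, ⨆ _ : j ≠ i', Us j := by
          refine iSup_le fun j => iSup_le fun hj => ?_
          by_cases hj0 : j = 0
          · subst hj0
            rw [Fin.cons_zero]
            exact le_sup_left
          · obtain ⟨j', rfl⟩ : ∃ j', j = j'.succ := ⟨j.pred hj0, (Fin.succ_pred j hj0).symm⟩
            rw [Fin.cons_succ]
            have hne : j' ≠ i' := fun hh => hj (by rw [hh])
            exact le_sup_of_le_right (le_iSup_of_le j' (le_iSup_of_le hne le_rfl))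
        refine Disjoint.mono_right hcons_le ?_
        rw [disjoint_iff]
        have h2 : ((⨆ j, ⨆ _ : j ≠ i', Us j) ⊔ U) ⊓ S' = ⨆ j, ⨆ _ : j ≠ i', Us j := by
          rw [sup_inf_assoc_of_le U hXle, hdisj, sup_bot_eq]
        have h1 : Us i' ⊓ (U ⊔ ⨆ j, ⨆ _ : j ≠ i', Us j) ≤ ⨆ j, ⨆ _ : j ≠ i', Us j := by
          calc Us i' ⊓ (U ⊔ ⨆ j, ⨆ _ : j ≠ i', Us j)
              ≤ S' ⊓ (U ⊔ ⨆ j, ⨆ _ : j ≠ i', Us j) := inf_le_inf_right _ (hUsS' i')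
            _ = ((⨆ j, ⨆ _ : j ≠ i', Us j) ⊔ U) ⊓ S' := by rw [inf_comm, sup_comm]
            _ = ⨆ j, ⨆ _ : j ≠ i', Us j := h2
        have h3 : Us i' ⊓ (U ⊔ ⨆ j, ⨆ _ : j ≠ i', Us j) ≤ Us i' ⊓ ⨆ j, ⨆ _ : j ≠ i', Us j :=
          le_inf inf_le_left h1
        exact le_bot_iff.mp (h3.trans (disjoint_iff.mp (hind i')).le)
    · refine le_antisymm (iSup_le fun i => ?_) ?_
      · refine Fin.cases ?_ ?_ i
        · rw [Fin.cons_zero]; exact hUS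
        · intro i'
          rw [Fin.cons_succ]
          exact (hUsS' i').trans hS'S
      · rw [← hsupUS']
        refine sup_le ?_ ?_
        · exact le_iSup_of_le 0 (by rw [Fin.cons_zero])
        · rw [← hUssup]
          refine iSup_le fun i' => le_iSup_of_le i'.succ (by rw [Fin.cons_succ])
    · intro i
      refine Fin.cases ?_ ?_ i
      · rw [Fin.cons_zero]
        exact hU_elem
      · intro i'
        rw [Fin.cons_succ]
        exact helem i'
    · intro i j hij z hz y hy
      rcases Fin.eq_zero_or_eq_succ i with hi | ⟨i', rfl⟩
      · subst hi
        rcases Fin.eq_zero_or_eq_succ j with hj | ⟨j', rfl⟩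
        · exact absurd hj.symm hij
        · rw [Fin.cons_zero] at hz
          rw [Fin.cons_succ] at hy
          exact orth_U_perp z hz y (hS'perp (hUsS' j' hy))
      · rw [Fin.cons_succ] at hz
        rcases Fin.eq_zero_or_eq_succ j with hj | ⟨j', rfl⟩
        · subst hj
          rw [Fin.cons_zero] at hy
          rw [hsymm]
          exact orth_U_perp y hy z (hS'perp (hUsS' i' hz))
        · rw [Fin.cons_succ] at hy
          exact horth i' j' (fun hh => hij (congrArg Fin.succ hh)) z hz y hy

end HRKey

/-- Every HR-module is isomorphic, as an HR-datum, to a finite direct sum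
of elementary HR-modules `A_m`: there is an internal decomposition of `W` into finitely
many pairwise orthogonal elementary HR-submodules. -/
theorem hrModule_decomposition (h : HRData W) (hm : h.IsHRModule) :
    ∃ (N : ℕ) (m : Fin N → ℕ) (U : Fin N → Submodule ℝ W),
      DirectSum.IsInternal U ∧
      (∀ i, h.IsElementarySub (m i) (U i)) ∧
      (∀ i j, i ≠ j → ∀ x ∈ U i, ∀ y ∈ U j, h.form x y = 0) := by
  obtain ⟨⟨hfin, hint, ⟨m0, hbound⟩, hsymm, hnd, hdeg0, hreal, hlefdeg, hadj⟩, hpos⟩ := hm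
  haveI := hfin
  have hnd' : ∀ d : ℤ, ∀ x ∈ h.grading d, (∀ y ∈ h.grading (-d), h.form x y = 0) → x = 0 := by
    intro d x hx h0
    refine hnd x fun y => ?_
    have hy : y ∈ ⨆ e, h.grading e := by
      rw [hint.submodule_iSup_eq_top]
      trivial
    refine Submodule.iSup_induction (motive := fun z => h.form x z = 0) _ hy (fun e z hz => ?_)
      (show h.form x 0 = 0 from map_zero _)
      (fun a b ha hb => by
        show h.form x (a + b) = 0
        rw [map_add]
        show h.form x a + h.form x b = 0
        rw [(show h.form x a = 0 from ha), (show h.form x b = 0 from hb), add_zero])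
    by_cases he : e = -d
    · exact h0 z (he ▸ hz)
    · exact hdeg0 d e (fun hc => he (by omega)) x hx z hz
  obtain ⟨N, mf, Us, hind, hsup, helem, horth⟩ :=
    hr_key h m0 hbound hsymm hdeg0 hreal hlefdeg hadj hpos (Module.finrank ℝ W) h.grading
      (fun d => le_rfl) hlefdeg hnd'
      (by rw [hint.submodule_iSup_eq_top]; exact le_of_eq (finrank_top ℝ W))
  refine ⟨N, mf, Us, ?_, helem, horth⟩
  exact (DirectSum.isInternal_submodule_iff_iSupIndep_and_iSup_eq_top Us).mpr
    ⟨hind, by rw [hsup, hint.submodule_iSup_eq_top]⟩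
end

section
/- For every n ≥ 1 there is an isomorphism of HR-data A_n ⊗ A_1 ≅ A_{n+1} ⊕ A_{n−1}; in particular A_n ⊗ A_1 is an HR-module. -/
open scoped TensorProduct

private theorem bilin_span_mem {W₁ W₂ V : Type*} [AddCommGroup W₁] [Module ℝ W₁]
    [AddCommGroup W₂] [Module ℝ W₂] [AddCommGroup V] [Module ℝ V]
    (Φ : W₁ →ₗ[ℝ] W₂ →ₗ[ℝ] V) (M : Submodule ℝ V) {s : Set W₁} {t : Set W₂}
    (h : ∀ x ∈ s, ∀ y ∈ t, Φ x y ∈ M) :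
    ∀ x ∈ Submodule.span ℝ s, ∀ y ∈ Submodule.span ℝ t, Φ x y ∈ M := by
  intro x hx
  induction hx using Submodule.span_induction with
  | mem x hxs =>
      intro y hy
      induction hy using Submodule.span_induction with
      | mem y hyt => exact h _ hxs _ hyt
      | zero => simp
      | add y z _ _ hy hz => rw [map_add]; exact M.add_mem hy hz
      | smul r y _ hy => rw [map_smul]; exact M.smul_mem r hy
  | zero => intro y hy; simp
  | add x z _ _ hx' hz' =>
      intro y hy
      rw [map_add, LinearMap.add_apply]
      exact M.add_mem (hx' y hy) (hz' y hy)
  | smul r x _ hx' =>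
      intro y hy
      rw [map_smul, LinearMap.smul_apply]
      exact M.smul_mem r (hx' y hy)

private theorem grading_det {W : Type*} [AddCommGroup W] [Module ℝ W]
    {g s : ℤ → Submodule ℝ W} (hint : DirectSum.IsInternal g)
    (hle : ∀ i, s i ≤ g i) (hsup : ⨆ i, s i = ⊤) (i : ℤ) : s i = g i := by
  refine le_antisymm (hle i) fun x hx => ?_
  have hx' : x ∈ ⨆ j, s j := hsup ▸ Submodule.mem_top
  have hle2 : (⨆ j, s j) ≤ s i ⊔ ⨆ j, ⨆ _ : j ≠ i, s j := by
    refine iSup_le fun j => ?_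
    rcases eq_or_ne j i with rfl | hj
    · exact le_sup_left
    · exact le_sup_of_le_right (le_iSup₂ (f := fun j (_ : j ≠ i) => s j) j hj)
  obtain ⟨y, hy, z, hz, hyz⟩ := Submodule.mem_sup.mp (hle2 hx')
  have hzg : z ∈ ⨆ j, ⨆ _ : j ≠ i, g j :=
    (iSup_mono fun j => iSup_mono' fun hj => ⟨hj, hle j⟩) hz
  have hzi : z ∈ g i := by
    have hz' : z = x - y := by rw [← hyz]; abel
    rw [hz']
    exact Submodule.sub_mem _ hx (hle i hy)
  have hz0 : z = 0 := by
    have hd := (hint.submodule_iSupIndep i).le_bot (Submodule.mem_inf.mpr ⟨hzi, hzg⟩)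
    simpa using hd
  have : x = y := by rw [← hyz, hz0, add_zero]
  rw [this]; exact hy


variable {W : Type*} [AddCommGroup W] [Module ℝ W]

set_option maxHeartbeats 4000000 in
/-- For every `n ≥ 1` there is an isomorphism of HR-data
`A_n ⊗ A_1 ≅ A_{n+1} ⊕ A_{n−1}`; in particular `A_n ⊗ A_1` is an HR-module.  Here `a` is
a copy of `A_n`, `b` a copy of `A_1`, and `t` is their tensor product HR-data
(characterized by the stated equations); the isomorphism is realized by an internal
orthogonal decomposition of the tensor product into elementary submodules of types
`n + 1` and `n − 1`. -/
theorem elementary_tensor_A1 {Wn W1 : Type*}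
    [AddCommGroup Wn] [Module ℝ Wn] [AddCommGroup W1] [Module ℝ W1]
    (n : ℕ) (hn : 1 ≤ n)
    (a : HRData Wn) (b : HRData W1)
    (ha : a.IsElementary n) (hb : b.IsElementary 1)
    (t : HRData (Wn ⊗[ℝ] W1))
    (htg : ∀ k : ℤ, t.grading k = ⨆ i : ℤ, LinearMap.range
      (TensorProduct.map (a.grading i).subtype (b.grading (k - i)).subtype))
    (htf : ∀ (x x' : Wn) (y y' : W1),
      t.form (x ⊗ₜ y) (x' ⊗ₜ y') = a.form x x' * b.form y y')
    (htl : ∀ (x : Wn) (y : W1),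
      t.lef (x ⊗ₜ y) = a.lef x ⊗ₜ y + x ⊗ₜ b.lef y) :
    t.IsHRModule ∧
    ∃ U U' : Submodule ℝ (Wn ⊗[ℝ] W1),
      IsCompl U U' ∧
      t.IsElementarySub (n + 1) U ∧
      t.IsElementarySub (n - 1) U' ∧
      (∀ x ∈ U, ∀ y ∈ U', t.form x y = 0) := by
  classical
  obtain ⟨⟨haFD, haInt, -, haSym, -, -, -, -, haSA⟩, ea, hea_ind, hea_span, hea_grade, hea_lef, hea_form⟩ := ha
  obtain ⟨⟨hbFD, hbInt, -, hbSym, -, -, -, -, hbSA⟩, fb, hfb_ind, hfb_span, hfb_grade, hfb_lef, hfb_form⟩ := hb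
  haveI := haFD
  haveI := hbFD
  -- truncated vector families
  obtain ⟨E, hE1, hE0⟩ : ∃ E : ℕ → Wn, (∀ i (h : i < n + 1), E i = ea ⟨i, h⟩) ∧
      (∀ i, n + 1 ≤ i → E i = 0) :=
    ⟨fun i => if h : i < n + 1 then ea ⟨i, h⟩ else 0,
     fun i h => dif_pos h, fun i h => dif_neg (by omega)⟩
  obtain ⟨F, hF1, hF0⟩ : ∃ F : ℕ → W1, (∀ s (h : s < 2), F s = fb ⟨s, h⟩) ∧
      (∀ s, 2 ≤ s → F s = 0) :=
    ⟨fun s => if h : s < 2 then fb ⟨s, h⟩ else 0,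
     fun s h => dif_pos h, fun s h => dif_neg (by omega)⟩
  have lefE : ∀ i, a.lef (E i) = E (i + 1) := by
    intro i
    by_cases h : i < n + 1
    · rw [hE1 i h, hea_lef ⟨i, h⟩]
      by_cases h' : i + 1 < n + 1
      · rw [dif_pos h', hE1 (i + 1) h']
      · rw [dif_neg h', hE0 (i + 1) (by omega)]
    · rw [hE0 i (by omega), map_zero, hE0 (i + 1) (by omega)]
  have lefF : ∀ s, b.lef (F s) = F (s + 1) := by
    intro s
    by_cases h : s < 2
    · rw [hF1 s h, hfb_lef ⟨s, h⟩]
      by_cases h' : s + 1 < 2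
      · rw [dif_pos h', hF1 (s + 1) h']
      · rw [dif_neg h', hF0 (s + 1) (by omega)]
    · rw [hF0 s (by omega), map_zero, hF0 (s + 1) (by omega)]
  have formE : ∀ i i', a.form (E i) (E i') =
      if i + i' = n then (-Complex.I) ^ n else 0 := by
    intro i i'
    by_cases h : i < n + 1
    · by_cases h' : i' < n + 1
      · rw [hE1 i h, hE1 i' h', hea_form ⟨i, h⟩ ⟨i', h'⟩]
      · rw [hE0 i' (by omega), map_zero, if_neg (by omega)]
    · rw [hE0 i (by omega), map_zero, LinearMap.zero_apply, if_neg (by omega)]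
  have formF : ∀ s s', b.form (F s) (F s') =
      if s + s' = 1 then -Complex.I else 0 := by
    intro s s'
    by_cases h : s < 2
    · by_cases h' : s' < 2
      · rw [hF1 s h, hF1 s' h', hfb_form ⟨s, h⟩ ⟨s', h'⟩]
        simp
      · rw [hF0 s' (by omega), map_zero, if_neg (by omega)]
    · rw [hF0 s (by omega), map_zero, LinearMap.zero_apply, if_neg (by omega)]
  have gradeE : ∀ i : ℕ, E i ∈ a.grading (2 * (i : ℤ) - n) := by
    intro i
    by_cases h : i < n + 1
    · rw [hE1 i h]
      exact hea_grade ⟨i, h⟩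
    · rw [hE0 i (by omega)]
      exact Submodule.zero_mem _
  have gradeF : ∀ s : ℕ, F s ∈ b.grading (2 * (s : ℤ) - 1) := by
    intro s
    by_cases h : s < 2
    · rw [hF1 s h]
      exact hfb_grade ⟨s, h⟩
    · rw [hF0 s (by omega)]
      exact Submodule.zero_mem _
  -- bases
  let Ba : Module.Basis (Fin (n + 1)) ℝ Wn := Module.Basis.mk hea_ind hea_span.le
  let Bb : Module.Basis (Fin 2) ℝ W1 := Module.Basis.mk hfb_ind hfb_span.le
  let bT : Module.Basis (Fin (n + 1) × Fin 2) ℝ (Wn ⊗[ℝ] W1) := Ba.tensorProduct Bb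
  have hBT : ∀ p : Fin (n + 1) × Fin 2, bT p = E (p.1 : ℕ) ⊗ₜ[ℝ] F (p.2 : ℕ) := by
    rintro ⟨i, s⟩
    show (Ba.tensorProduct Bb) (i, s) = _
    rw [Module.Basis.tensorProduct_apply, hE1 _ i.isLt, hF1 _ s.isLt]
    simp [Ba, Bb]
  -- membership of pure tensors in the grading of t
  have mem_tg : ∀ (k : ℤ) (j s : ℕ), k = 2 * (j : ℤ) + 2 * (s : ℤ) - (n + 1) →
      E j ⊗ₜ[ℝ] F s ∈ t.grading k := by
    intro k j s hk
    rw [htg k]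
    refine Submodule.mem_iSup_of_mem (2 * (j : ℤ) - n) ?_
    have hFs : F s ∈ b.grading (k - (2 * (j : ℤ) - n)) := by
      have h2 : k - (2 * (j : ℤ) - n) = 2 * (s : ℤ) - 1 := by omega
      rw [h2]
      exact gradeF s
    exact ⟨(⟨E j, gradeE j⟩ : a.grading (2 * (j : ℤ) - n)) ⊗ₜ[ℝ]
      (⟨F s, hFs⟩ : b.grading (k - (2 * (j : ℤ) - n))), by
        simp [TensorProduct.map_tmul]⟩
  -- form and Lefschetz on basis tensors
  have tformEF : ∀ j s j' s' : ℕ, t.form (E j ⊗ₜ[ℝ] F s) (E j' ⊗ₜ[ℝ] F s') =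
      if j + j' = n ∧ s + s' = 1 then (-Complex.I) ^ (n + 1) else 0 := by
    intro j s j' s'
    rw [htf, formE, formF]
    by_cases h1 : j + j' = n <;> by_cases h2 : s + s' = 1 <;>
      simp [h1, h2, pow_succ]
  have tlefEF : ∀ j s : ℕ, t.lef (E j ⊗ₜ[ℝ] F s) =
      E (j + 1) ⊗ₜ[ℝ] F s + E j ⊗ₜ[ℝ] F (s + 1) := by
    intro j s
    rw [htl, lefE, lefF]
  -- grading characterizations
  have hagr : ∀ d : ℤ, a.grading d =
      Submodule.span ℝ (ea '' {j : Fin (n + 1) | 2 * ((j : ℕ) : ℤ) - n = d}) := by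
    have hle : ∀ d : ℤ, Submodule.span ℝ (ea '' {j : Fin (n + 1) | 2 * ((j : ℕ) : ℤ) - n = d})
        ≤ a.grading d := by
      intro d
      refine Submodule.span_le.mpr ?_
      rintro _ ⟨j, hj, rfl⟩
      exact hj ▸ hea_grade j
    have hsup : (⨆ d : ℤ, Submodule.span ℝ
        (ea '' {j : Fin (n + 1) | 2 * ((j : ℕ) : ℤ) - n = d})) = ⊤ := by
      refine le_antisymm le_top ?_
      rw [hea_span]
      refine Submodule.span_le.mpr ?_
      rintro _ ⟨j, rfl⟩
      exact Submodule.mem_iSup_of_mem (2 * ((j : ℕ) : ℤ) - n)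
        (Submodule.subset_span ⟨j, rfl, rfl⟩)
    exact fun d => (grading_det haInt hle hsup d).symm
  have hbgr : ∀ d : ℤ, b.grading d =
      Submodule.span ℝ (fb '' {s : Fin 2 | 2 * ((s : ℕ) : ℤ) - 1 = d}) := by
    have hle : ∀ d : ℤ, Submodule.span ℝ (fb '' {s : Fin 2 | 2 * ((s : ℕ) : ℤ) - 1 = d})
        ≤ b.grading d := by
      intro d
      refine Submodule.span_le.mpr ?_
      rintro _ ⟨j, hj, rfl⟩
      have h1 := hfb_grade j
      rw [show (2 * ((j : ℕ) : ℤ) - ((1 : ℕ) : ℤ)) = 2 * ((j : ℕ) : ℤ) - 1 by push_cast; ring] at h1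
      exact hj ▸ h1
    have hsup : (⨆ d : ℤ, Submodule.span ℝ
        (fb '' {s : Fin 2 | 2 * ((s : ℕ) : ℤ) - 1 = d})) = ⊤ := by
      refine le_antisymm le_top ?_
      rw [hfb_span]
      refine Submodule.span_le.mpr ?_
      rintro _ ⟨j, rfl⟩
      exact Submodule.mem_iSup_of_mem (2 * ((j : ℕ) : ℤ) - 1)
        (Submodule.subset_span ⟨j, rfl, rfl⟩)
    exact fun d => (grading_det hbInt hle hsup d).symm
  have hgr : ∀ k : ℤ, t.grading k = Submodule.span ℝ
      (⇑bT '' {p : Fin (n + 1) × Fin 2 |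
        2 * ((p.1 : ℕ) : ℤ) + 2 * ((p.2 : ℕ) : ℤ) - (n + 1) = k}) := by
    intro k
    refine le_antisymm ?_ ?_
    · rw [htg k]
      refine iSup_le fun i => ?_
      rw [TensorProduct.range_map_eq_span_tmul]
      refine Submodule.span_le.mpr ?_
      rintro _ ⟨⟨x, hx⟩, ⟨y, hy⟩, rfl⟩
      simp only [Submodule.coe_subtype]
      rw [hagr i] at hx
      rw [hbgr (k - i)] at hy
      refine bilin_span_mem (TensorProduct.mk ℝ Wn W1) _ ?_ x hx y hy
      rintro _ ⟨j, hj, rfl⟩ _ ⟨u, hu, rfl⟩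
      refine Submodule.subset_span ⟨(j, u), ?_, ?_⟩
      · simp only [Set.mem_setOf_eq] at hj hu ⊢
        omega
      · rw [hBT (j, u), hE1 _ j.isLt, hF1 _ u.isLt]
        rfl
    · refine Submodule.span_le.mpr ?_
      rintro _ ⟨p, hp, rfl⟩
      rw [hBT p]
      exact mem_tg k _ _ (by simp only [Set.mem_setOf_eq] at hp; omega)
  -- scaling constant
  set c : ℝ := (Real.sqrt (n + 1))⁻¹ with hcdef
  have hc : c ≠ 0 := by
    rw [hcdef]
    positivity
  have hc2 : c * c = ((n : ℝ) + 1)⁻¹ := by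
    have h1 : Real.sqrt ((n : ℝ) + 1) * Real.sqrt ((n : ℝ) + 1) = ((n : ℝ) + 1) :=
      Real.mul_self_sqrt (by positivity)
    rw [hcdef, ← mul_inv]
    rw [show ((n : ℕ) + 1 : ℝ) = ((n : ℝ) + 1) by push_cast; ring] at *
    rw [h1]
  have hn1 : ((n : ℝ) + 1) ≠ 0 := by positivity
  -- the two families
  obtain ⟨Uc, hU0, hUS⟩ : ∃ Uc : ℕ → Wn ⊗[ℝ] W1,
      Uc 0 = c • (E 0 ⊗ₜ[ℝ] F 0) ∧
      ∀ j : ℕ, Uc (j + 1) = c • (E (j + 1) ⊗ₜ[ℝ] F 0) +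
        (c * ((j : ℝ) + 1)) • (E j ⊗ₜ[ℝ] F 1) :=
    ⟨fun m => match m with
      | 0 => c • (E 0 ⊗ₜ[ℝ] F 0)
      | (j+1) => c • (E (j + 1) ⊗ₜ[ℝ] F 0) + (c * ((j : ℝ) + 1)) • (E j ⊗ₜ[ℝ] F 1),
     rfl, fun _ => rfl⟩
  obtain ⟨Vc, hV⟩ : ∃ Vc : ℕ → Wn ⊗[ℝ] W1,
      ∀ j : ℕ, Vc j = c • (E (j + 1) ⊗ₜ[ℝ] F 0) +
        (c * ((j : ℝ) - n)) • (E j ⊗ₜ[ℝ] F 1) :=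
    ⟨_, fun _ => rfl⟩
  have hmi : (-Complex.I) ^ (n + 1) ≠ 0 := pow_ne_zero _ (neg_ne_zero.mpr Complex.I_ne_zero)
  have hmi' : (-Complex.I) ^ (n - 1) ≠ 0 := pow_ne_zero _ (neg_ne_zero.mpr Complex.I_ne_zero)
  -- general form computation on "α•E(j+1)⊗F0 + β•Ej⊗F1" type combinations
  have formC : ∀ (α β α' β' : ℝ) (j j' : ℕ),
      t.form (α • (E (j + 1) ⊗ₜ[ℝ] F 0) + β • (E j ⊗ₜ[ℝ] F 1))
        (α' • (E (j' + 1) ⊗ₜ[ℝ] F 0) + β' • (E j' ⊗ₜ[ℝ] F 1)) =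
      if j + j' + 2 = n + 1 then ((α * β' + β * α' : ℝ) : ℂ) * (-Complex.I) ^ (n + 1)
      else 0 := by
    intro α β α' β' j j'
    by_cases h : j + j' + 2 = n + 1
    · have h1 : j + 1 + j' = n := by omega
      have h2 : j + (j' + 1) = n := by omega
      simp [map_add, map_smul, LinearMap.add_apply, LinearMap.smul_apply, tformEF,
        Complex.real_smul, h1, h2, h]
      push_cast
      ring
    · have h1 : ¬(j + 1 + j' = n) := by omega
      have h2 : ¬(j + (j' + 1) = n) := by omega
      simp [map_add, map_smul, LinearMap.add_apply, LinearMap.smul_apply, tformEF,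
        Complex.real_smul, h1, h2, h]
  have form0C : ∀ (α' β' : ℝ) (j' : ℕ),
      t.form (c • (E 0 ⊗ₜ[ℝ] F 0))
        (α' • (E (j' + 1) ⊗ₜ[ℝ] F 0) + β' • (E j' ⊗ₜ[ℝ] F 1)) =
      if j' = n then ((c * β' : ℝ) : ℂ) * (-Complex.I) ^ (n + 1) else 0 := by
    intro α' β' j'
    by_cases h : j' = n
    · have h1 : 0 + j' = n := by omega
      simp [map_add, map_smul, LinearMap.add_apply, LinearMap.smul_apply, tformEF,
        Complex.real_smul, h1, h]
      push_cast
      ring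
    · have h1 : ¬(0 + j' = n) := by omega
      simp [map_add, map_smul, LinearMap.add_apply, LinearMap.smul_apply, tformEF,
        Complex.real_smul, h1, h]
  have formC0 : ∀ (α β : ℝ) (j : ℕ),
      t.form (α • (E (j + 1) ⊗ₜ[ℝ] F 0) + β • (E j ⊗ₜ[ℝ] F 1))
        (c • (E 0 ⊗ₜ[ℝ] F 0)) =
      if j = n then ((c * β : ℝ) : ℂ) * (-Complex.I) ^ (n + 1) else 0 := by
    intro α β j
    by_cases h : j = n
    · have h1 : j + 0 = n := by omega
      simp [map_add, map_smul, LinearMap.add_apply, LinearMap.smul_apply, tformEF,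
        Complex.real_smul, h1, h]
      push_cast
      ring
    · have h1 : ¬(j + 0 = n) := by omega
      simp [map_add, map_smul, LinearMap.add_apply, LinearMap.smul_apply, tformEF,
        Complex.real_smul, h1, h]
  have form00 : t.form (c • (E 0 ⊗ₜ[ℝ] F 0)) (c • (E 0 ⊗ₜ[ℝ] F 0)) = 0 := by
    simp [map_smul, LinearMap.smul_apply, tformEF, Complex.real_smul]
  -- the four pairing tables
  have hcoef : ∀ x : ℝ, c * (c * x) = ((n : ℝ) + 1)⁻¹ * x := by
    intro x
    rw [← mul_assoc, hc2]
  have formUU : ∀ m m' : ℕ, t.form (Uc m) (Uc m') =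
      if m + m' = n + 1 then (-Complex.I) ^ (n + 1) else 0 := by
    rintro (_ | j) (_ | j')
    · rw [hU0, form00, if_neg (by omega)]
    · rw [hU0, hUS j', form0C]
      by_cases h : j' = n
      · subst h
        rw [if_pos rfl, if_pos (by omega)]
        rw [hcoef, inv_mul_cancel₀ hn1]
        simp
      · rw [if_neg h, if_neg (by omega)]
    · rw [hUS j, hU0, formC0]
      by_cases h : j = n
      · subst h
        rw [if_pos rfl, if_pos (by omega)]
        rw [hcoef, inv_mul_cancel₀ hn1]
        simp
      · rw [if_neg h, if_neg (by omega)]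
    · rw [hUS j, hUS j', formC]
      by_cases h : j + j' + 2 = n + 1
      · rw [if_pos h, if_pos (by omega)]
        have hcast : (j : ℝ) + (j' : ℝ) + 2 = (n : ℝ) + 1 := by exact_mod_cast h
        have hr : (c * (c * ((j' : ℝ) + 1)) + c * ((j : ℝ) + 1) * c : ℝ) = 1 := by
          have : (c * (c * ((j' : ℝ) + 1)) + c * ((j : ℝ) + 1) * c : ℝ) =
              (c * c) * ((j : ℝ) + (j' : ℝ) + 2) := by ring
          rw [this, hc2, hcast, inv_mul_cancel₀ hn1]
        rw [hr]
        simp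
      · rw [if_neg h, if_neg (by omega)]
  have formVV : ∀ j j' : ℕ, t.form (Vc j) (Vc j') =
      if j + j' = n - 1 then (-Complex.I) ^ (n - 1) else 0 := by
    intro j j'
    rw [hV j, hV j', formC]
    by_cases h : j + j' + 2 = n + 1
    · rw [if_pos h, if_pos (by omega)]
      have hcast : (j : ℝ) + (j' : ℝ) + 2 = (n : ℝ) + 1 := by exact_mod_cast h
      have hr : (c * (c * ((j' : ℝ) - n)) + c * ((j : ℝ) - n) * c : ℝ) = -1 := by
        have h2 : (c * (c * ((j' : ℝ) - n)) + c * ((j : ℝ) - n) * c : ℝ) =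
            (c * c) * (((j : ℝ) + (j' : ℝ) + 2) - 2 * ((n : ℝ) + 1)) := by
          ring
        rw [h2, hc2, hcast]
        rw [show ((n : ℝ) + 1) - 2 * ((n : ℝ) + 1) = -((n : ℝ) + 1) by ring]
        rw [mul_neg, inv_mul_cancel₀ hn1]
      rw [hr]
      have hsq : (-Complex.I) ^ 2 = -1 := by
        rw [neg_sq, Complex.I_sq]
      have hpow : (-Complex.I) ^ (n + 1) = ((-Complex.I) ^ (n - 1)) * (-1) := by
        rw [show n + 1 = (n - 1) + 2 by omega, pow_add, hsq]
      rw [hpow]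
      push_cast
      ring
    · rw [if_neg h, if_neg (by omega)]
  have formUV : ∀ m j' : ℕ, t.form (Uc m) (Vc j') = 0 := by
    rintro (_ | j) j'
    · rw [hU0, hV j', form0C]
      by_cases h : j' = n
      · subst h
        rw [if_pos rfl]
        simp
      · rw [if_neg h]
    · rw [hUS j, hV j', formC]
      by_cases h : j + j' + 2 = n + 1
      · rw [if_pos h]
        have hcast : (j : ℝ) + (j' : ℝ) + 2 = (n : ℝ) + 1 := by exact_mod_cast h
        have hr : (c * (c * ((j' : ℝ) - n)) + c * ((j : ℝ) + 1) * c : ℝ) = 0 := by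
          have : (c * (c * ((j' : ℝ) - n)) + c * ((j : ℝ) + 1) * c : ℝ) =
              (c * c) * (((j : ℝ) + (j' : ℝ) + 2) - ((n : ℝ) + 1)) := by ring
          rw [this, hcast]
          ring
        rw [hr]
        simp
      · rw [if_neg h]
  have formVU : ∀ j m : ℕ, t.form (Vc j) (Uc m) = 0 := by
    rintro j (_ | m')
    · rw [hV j, hU0, formC0]
      by_cases h : j = n
      · subst h
        rw [if_pos rfl]
        simp
      · rw [if_neg h]
    · rw [hV j, hUS m', formC]
      by_cases h : j + m' + 2 = n + 1
      · rw [if_pos h]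
        have hcast : (j : ℝ) + (m' : ℝ) + 2 = (n : ℝ) + 1 := by exact_mod_cast h
        have hr : (c * (c * ((m' : ℝ) + 1)) + c * ((j : ℝ) - n) * c : ℝ) = 0 := by
          have : (c * (c * ((m' : ℝ) + 1)) + c * ((j : ℝ) - n) * c : ℝ) =
              (c * c) * (((j : ℝ) + (m' : ℝ) + 2) - ((n : ℝ) + 1)) := by ring
          rw [this, hcast]
          ring
        rw [hr]
        simp
      · rw [if_neg h]
  -- Lefschetz action
  have hF2 : F 2 = 0 := hF0 2 le_rfl
  have lefU : ∀ m, t.lef (Uc m) = Uc (m + 1) := by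
    rintro (_ | j)
    · rw [hU0, map_smul, tlefEF, hUS 0]
      push_cast
      module
    · rw [hUS j, map_add, map_smul, map_smul, tlefEF, tlefEF, hF2,
        TensorProduct.tmul_zero, hUS (j + 1)]
      push_cast
      module
  have lefV : ∀ j, t.lef (Vc j) = Vc (j + 1) := by
    intro j
    rw [hV j, map_add, map_smul, map_smul, tlefEF, tlefEF, hF2,
      TensorProduct.tmul_zero, hV (j + 1)]
    push_cast
    module
  have powU : ∀ (k m : ℕ), (t.lef ^ k) (Uc m) = Uc (m + k) := by
    intro k
    induction k with
    | zero => intro m; simp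
    | succ k ih =>
        intro m
        rw [pow_succ, Module.End.mul_apply, lefU, ih, show m + 1 + k = m + (k + 1) by omega]
  have powV : ∀ (k j : ℕ), (t.lef ^ k) (Vc j) = Vc (j + k) := by
    intro k
    induction k with
    | zero => intro j; simp
    | succ k ih =>
        intro j
        rw [pow_succ, Module.End.mul_apply, lefV, ih, show j + 1 + k = j + (k + 1) by omega]
  have UZero : ∀ m, n + 2 ≤ m → Uc m = 0 := by
    rintro (_ | j) h
    · omega
    · rw [hUS j, hE0 (j + 1) (by omega), hE0 j (by omega)]
      simp
  have VZero : ∀ j, n ≤ j → Vc j = 0 := by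
    intro j h
    rcases eq_or_lt_of_le h with h' | h'
    · rw [hV j, hE0 (j + 1) (by omega), ← h', sub_self, mul_zero]
      simp
    · rw [hV j, hE0 (j + 1) (by omega), hE0 j (by omega)]
      simp
  have gradeU : ∀ m : ℕ, Uc m ∈ t.grading (2 * (m : ℤ) - ((n : ℤ) + 1)) := by
    rintro (_ | j)
    · rw [hU0]
      exact Submodule.smul_mem _ _ (mem_tg _ 0 0 (by push_cast; ring))
    · rw [hUS j]
      refine Submodule.add_mem _ (Submodule.smul_mem _ _ ?_) (Submodule.smul_mem _ _ ?_)
      · exact mem_tg _ (j + 1) 0 (by push_cast; ring)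
      · exact mem_tg _ j 1 (by push_cast; ring)
  have gradeV : ∀ j : ℕ, Vc j ∈ t.grading (2 * (j : ℤ) - ((n : ℤ) - 1)) := by
    intro j
    rw [hV j]
    refine Submodule.add_mem _ (Submodule.smul_mem _ _ ?_) (Submodule.smul_mem _ _ ?_)
    · exact mem_tg _ (j + 1) 0 (by push_cast; ring)
    · exact mem_tg _ j 1 (by push_cast; ring)
  -- solving for the basis vectors
  have hsolve : ∀ j' : ℕ,
      E (j' + 1) ⊗ₜ[ℝ] F 0 ∈ Submodule.span ℝ {Uc (j' + 1), Vc j'} ∧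
      E j' ⊗ₜ[ℝ] F 1 ∈ Submodule.span ℝ {Uc (j' + 1), Vc j'} := by
    intro j'
    constructor
    · rw [Submodule.mem_span_pair]
      refine ⟨((n : ℝ) - j') * (c * ((n : ℝ) + 1))⁻¹, ((j' : ℝ) + 1) * (c * ((n : ℝ) + 1))⁻¹, ?_⟩
      rw [hUS j', hV j']
      match_scalars
      · field_simp
        try ring
      · field_simp
        try ring
    · rw [Submodule.mem_span_pair]
      refine ⟨(c * ((n : ℝ) + 1))⁻¹, -(c * ((n : ℝ) + 1))⁻¹, ?_⟩
      rw [hUS j', hV j']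
      match_scalars
      · field_simp
        try ring
      · field_simp
        try ring
  have hE00U : E 0 ⊗ₜ[ℝ] F 0 = c⁻¹ • Uc 0 := by
    rw [hU0, inv_smul_smul₀ hc]
  have hEn1U : E n ⊗ₜ[ℝ] F 1 = (c * ((n : ℝ) + 1))⁻¹ • Uc (n + 1) := by
    rw [hUS n, hE0 (n + 1) le_rfl, TensorProduct.zero_tmul, smul_zero, zero_add,
      inv_smul_smul₀ (mul_ne_zero hc hn1)]
  -- pairing sums
  have pairUc : ∀ (g : Fin (n + 2) → ℝ) (y : Wn ⊗[ℝ] W1),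
      t.form (∑ m, g m • Uc (m : ℕ)) y = ∑ m, (g m : ℂ) * t.form (Uc (m : ℕ)) y := by
    intro g y
    rw [map_sum, LinearMap.sum_apply]
    refine Finset.sum_congr rfl fun m _ => ?_
    rw [map_smul, LinearMap.smul_apply, Complex.real_smul]
  have pairVc : ∀ (g : Fin (n - 1 + 1) → ℝ) (y : Wn ⊗[ℝ] W1),
      t.form (∑ j, g j • Vc (j : ℕ)) y = ∑ j, (g j : ℂ) * t.form (Vc (j : ℕ)) y := by
    intro g y
    rw [map_sum, LinearMap.sum_apply]
    refine Finset.sum_congr rfl fun m _ => ?_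
    rw [map_smul, LinearMap.smul_apply, Complex.real_smul]
  have extractU : ∀ (g : Fin (n + 2) → ℝ) (m₀ : Fin (n + 2)),
      t.form (∑ m, g m • Uc (m : ℕ)) (Uc (n + 1 - (m₀ : ℕ))) =
        (g m₀ : ℂ) * (-Complex.I) ^ (n + 1) := by
    intro g m₀
    rw [pairUc]
    rw [Finset.sum_eq_single m₀]
    · rw [formUU, if_pos (by have := m₀.isLt; omega)]
    · intro m _ hm
      rw [formUU, if_neg, mul_zero]
      intro hcond
      refine hm (Fin.ext ?_)
      have h1 := m.isLt
      have h2 := m₀.isLt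
      omega
    · intro h
      exact absurd (Finset.mem_univ m₀) h
  have extractV : ∀ (g : Fin (n - 1 + 1) → ℝ) (j₀ : Fin (n - 1 + 1)),
      t.form (∑ j, g j • Vc (j : ℕ)) (Vc (n - 1 - (j₀ : ℕ))) =
        (g j₀ : ℂ) * (-Complex.I) ^ (n - 1) := by
    intro g j₀
    rw [pairVc]
    rw [Finset.sum_eq_single j₀]
    · rw [formVV, if_pos (by have := j₀.isLt; omega)]
    · intro m _ hm
      rw [formVV, if_neg, mul_zero]
      intro hcond
      refine hm (Fin.ext ?_)
      have h1 := m.isLt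
      have h2 := j₀.isLt
      omega
    · intro h
      exact absurd (Finset.mem_univ j₀) h
  have extractVU : ∀ (g : Fin (n - 1 + 1) → ℝ) (m₀ : ℕ),
      t.form (∑ j, g j • Vc (j : ℕ)) (Uc m₀) = 0 := by
    intro g m₀
    rw [pairVc]
    simp [formVU]
  -- the submodules
  set U : Submodule ℝ (Wn ⊗[ℝ] W1) :=
    Submodule.span ℝ (Set.range fun m : Fin (n + 1 + 1) => Uc (m : ℕ)) with hUdef
  set U' : Submodule ℝ (Wn ⊗[ℝ] W1) :=
    Submodule.span ℝ (Set.range fun j : Fin (n - 1 + 1) => Vc (j : ℕ)) with hU'def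
  have hreal : ∀ (z : ℂ) (r : ℝ), z * (-Complex.I) ^ (n+1) = 0 → (-Complex.I)^(n+1) ≠ 0 → z = 0 := by
    intro z r h hne
    rcases mul_eq_zero.mp h with h' | h'
    · exact h'
    · exact absurd h' hne
  -- elementary structures
  have elemU : t.IsElementarySub (n + 1) U := by
    refine ⟨fun m : Fin (n + 1 + 1) => Uc (m : ℕ), ?_, hUdef, ?_, ?_, ?_⟩
    · rw [Fintype.linearIndependent_iff]
      intro g hg m₀
      have h1 := extractU g m₀
      rw [hg, map_zero, LinearMap.zero_apply] at h1
      rcases mul_eq_zero.mp h1.symm with h' | h'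
      · exact_mod_cast h'
      · exact absurd h' hmi
    · intro j
      rw [show ((n + 1 : ℕ) : ℤ) = (n : ℤ) + 1 by push_cast; ring]
      exact gradeU _
    · intro j
      by_cases hj : (j : ℕ) + 1 < n + 1 + 1
      · rw [lefU, dif_pos hj]
      · rw [dif_neg hj, lefU]
        exact UZero _ (by have := j.isLt; omega)
    · intro j j'
      exact formUU _ _
  have elemV : t.IsElementarySub (n - 1) U' := by
    refine ⟨fun j : Fin (n - 1 + 1) => Vc (j : ℕ), ?_, hU'def, ?_, ?_, ?_⟩
    · rw [Fintype.linearIndependent_iff]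
      intro g hg j₀
      have h1 := extractV g j₀
      rw [hg, map_zero, LinearMap.zero_apply] at h1
      rcases mul_eq_zero.mp h1.symm with h' | h'
      · exact_mod_cast h'
      · exact absurd h' hmi'
    · intro j
      rw [show ((n - 1 : ℕ) : ℤ) = (n : ℤ) - 1 by omega]
      exact gradeV _
    · intro j
      by_cases hj : (j : ℕ) + 1 < n - 1 + 1
      · rw [lefV, dif_pos hj]
      · rw [dif_neg hj, lefV]
        exact VZero _ (by have := j.isLt; omega)
    · intro j j'
      exact formVV _ _
  have horth : ∀ x ∈ U, ∀ y ∈ U', t.form x y = 0 := by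
    intro x hx y hy
    rw [hUdef] at hx
    rw [hU'def] at hy
    have h := bilin_span_mem t.form ⊥ ?_ x hx y hy
    · simpa using h
    · rintro _ ⟨m, rfl⟩ _ ⟨j, rfl⟩
      simp [formUV]
  have hpair_le : ∀ j'' : ℕ, j'' + 1 ≤ n →
      Submodule.span ℝ {Uc (j'' + 1), Vc j''} ≤ U ⊔ U' := by
    intro j'' hj''
    refine Submodule.span_le.mpr ?_
    rintro z hz
    rcases Set.mem_insert_iff.mp hz with rfl | hz'
    · exact Submodule.mem_sup_left
        (hUdef ▸ Submodule.subset_span ⟨(⟨j'' + 1, by omega⟩ : Fin (n + 1 + 1)), rfl⟩)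
    · rw [Set.mem_singleton_iff.mp hz']
      exact Submodule.mem_sup_right
        (hU'def ▸ Submodule.subset_span ⟨(⟨j'', by omega⟩ : Fin (n - 1 + 1)), rfl⟩)
  have hUmem : ∀ m : ℕ, m ≤ n + 1 → Uc m ∈ U := by
    intro m hm
    exact hUdef ▸ Submodule.subset_span ⟨(⟨m, by omega⟩ : Fin (n + 1 + 1)), rfl⟩
  have hcompl : IsCompl U U' := by
    constructor
    · rw [Submodule.disjoint_def]
      intro x hxU hxU'
      obtain ⟨gU, hgU⟩ := (Submodule.mem_span_range_iff_exists_fun ℝ).mp (hUdef ▸ hxU)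
      obtain ⟨gV, hgV⟩ := (Submodule.mem_span_range_iff_exists_fun ℝ).mp (hU'def ▸ hxU')
      have hg0 : ∀ m₀ : Fin (n + 2), gU m₀ = 0 := by
        intro m₀
        have h1 := extractU gU m₀
        rw [hgU] at h1
        have h2 : t.form x (Uc (n + 1 - (m₀ : ℕ))) = 0 := by
          rw [← hgV]
          exact extractVU gV _
        rw [h2] at h1
        rcases mul_eq_zero.mp h1.symm with h' | h'
        · exact_mod_cast h'
        · exact absurd h' hmi
      rw [← hgU]
      simp [hg0]
    · rw [codisjoint_iff_le_sup]
      rw [← bT.span_eq]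
      refine Submodule.span_le.mpr ?_
      rintro _ ⟨p, rfl⟩
      rw [hBT p]
      obtain ⟨⟨j, hj⟩, ⟨sv, hs⟩⟩ := p
      simp only []
      interval_cases sv
      · rcases j with _ | j''
        · rw [hE00U]
          exact Submodule.smul_mem _ _ (Submodule.mem_sup_left (hUmem 0 (by omega)))
        · exact hpair_le j'' (by omega) (hsolve j'').1
      · rcases eq_or_lt_of_le (show j ≤ n by omega) with hje | hjl
        · rw [hje, hEn1U]
          exact Submodule.smul_mem _ _ (Submodule.mem_sup_left (hUmem (n + 1) le_rfl))
        · exact hpair_le j (by omega) (hsolve j).2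
  have tformBB : ∀ p q : Fin (n + 1) × Fin 2, t.form (bT p) (bT q) =
      if (p.1 : ℕ) + (q.1 : ℕ) = n ∧ (p.2 : ℕ) + (q.2 : ℕ) = 1
      then (-Complex.I) ^ (n + 1) else 0 := by
    intro p q
    rw [hBT, hBT]
    exact tformEF _ _ _ _
  have hdatum : t.IsHRDatum := by
    refine ⟨inferInstance, ?_, ?_, ?_, ?_, ?_, ?_, ?_, ?_⟩
    · -- internal
      have hsup : (⨆ k : ℤ, Submodule.span ℝ (⇑bT '' {p : Fin (n + 1) × Fin 2 |
          2 * ((p.1 : ℕ) : ℤ) + 2 * ((p.2 : ℕ) : ℤ) - (n + 1) = k})) = ⊤ := by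
        refine le_antisymm le_top ?_
        rw [← bT.span_eq]
        refine Submodule.span_le.mpr ?_
        rintro _ ⟨p, rfl⟩
        exact Submodule.mem_iSup_of_mem (2 * ((p.1 : ℕ) : ℤ) + 2 * ((p.2 : ℕ) : ℤ) - (n + 1))
          (Submodule.subset_span ⟨p, rfl, rfl⟩)
      have hind : iSupIndep (fun k : ℤ => Submodule.span ℝ (⇑bT '' {p : Fin (n + 1) × Fin 2 |
          2 * ((p.1 : ℕ) : ℤ) + 2 * ((p.2 : ℕ) : ℤ) - (n + 1) = k})) := by
        intro k
        rw [Submodule.disjoint_def]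
        intro x hx1 hx2
        have hs1 := bT.mem_span_image.mp hx1
        have hle2 : (⨆ j, ⨆ _ : j ≠ k, Submodule.span ℝ (⇑bT '' {p : Fin (n + 1) × Fin 2 |
            2 * ((p.1 : ℕ) : ℤ) + 2 * ((p.2 : ℕ) : ℤ) - (n + 1) = j})) ≤
            Submodule.span ℝ (⇑bT '' {p : Fin (n + 1) × Fin 2 |
            2 * ((p.1 : ℕ) : ℤ) + 2 * ((p.2 : ℕ) : ℤ) - (n + 1) ≠ k}) := by
          refine iSup_le fun j => iSup_le fun hj => Submodule.span_mono (Set.image_mono ?_)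
          intro p hp
          simp only [Set.mem_setOf_eq] at hp ⊢
          rw [hp]
          exact hj
        have hs2 := bT.mem_span_image.mp (hle2 hx2)
        have hz : bT.repr x = 0 := by
          ext p
          by_contra hne
          have hmem : p ∈ (bT.repr x).support := Finsupp.mem_support_iff.mpr hne
          exact (hs2 hmem) (hs1 hmem)
        exact bT.repr.map_eq_zero_iff.mp hz
      have := DirectSum.isInternal_submodule_of_iSupIndep_of_iSup_eq_top hind hsup
      have hgrf : t.grading = (fun k : ℤ => Submodule.span ℝ (⇑bT '' {p : Fin (n + 1) × Fin 2 |
          2 * ((p.1 : ℕ) : ℤ) + 2 * ((p.2 : ℕ) : ℤ) - (n + 1) = k})) := funext hgr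
      rw [hgrf]
      exact this
    · -- bounded degrees
      refine ⟨n + 1, fun k hk => ?_⟩
      rw [hgr k]
      have hemp : {p : Fin (n + 1) × Fin 2 |
          2 * ((p.1 : ℕ) : ℤ) + 2 * ((p.2 : ℕ) : ℤ) - (n + 1) = k} = ∅ := by
        ext p
        simp only [Set.mem_setOf_eq, Set.mem_empty_iff_false, iff_false]
        intro hp
        have h1 := p.1.isLt
        have h2 := p.2.isLt
        rcases lt_abs.mp hk with h' | h' <;> omega
      rw [hemp]
      simp
    · -- symmetry
      intro x y
      induction x using TensorProduct.induction_on with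
      | zero => simp
      | tmul p q =>
          induction y using TensorProduct.induction_on with
          | zero => simp
          | tmul p' q' => rw [htf, htf, haSym, hbSym]
          | add y₁ y₂ h1 h2 => simp only [map_add, LinearMap.add_apply, h1, h2]
      | add x₁ x₂ h1 h2 => simp only [map_add, LinearMap.add_apply, h1, h2]
    · -- nondegeneracy
      intro x hx0
      have hrep : ∀ p : Fin (n + 1) × Fin 2, bT.repr x p = 0 := by
        rintro ⟨⟨j, hj⟩, ⟨sv, hs⟩⟩
        have hform := hx0 (bT ((⟨n - j, by omega⟩ : Fin (n + 1)), (⟨1 - sv, by omega⟩ : Fin 2)))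
        rw [← bT.sum_repr x, map_sum, LinearMap.sum_apply] at hform
        simp only [map_smul, LinearMap.smul_apply] at hform
        rw [Finset.sum_eq_single ((⟨j, hj⟩ : Fin (n + 1)), (⟨sv, hs⟩ : Fin 2))] at hform
        · rw [tformBB, if_pos (by constructor <;> simp <;> omega)] at hform
          rw [Complex.real_smul] at hform
          rcases mul_eq_zero.mp hform with h' | h'
          · exact_mod_cast h'
          · exact absurd h' hmi
        · intro p _ hp
          rw [tformBB, if_neg, smul_zero]
          rintro ⟨h1, h2⟩
          refine hp (Prod.ext (Fin.ext ?_) (Fin.ext ?_))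
          · have := p.1.isLt
            simp only [] at h1 h2 ⊢
            omega
          · have := p.2.isLt
            simp only [] at h1 h2 ⊢
            omega
        · intro h
          exact absurd (Finset.mem_univ _) h
      have hz : bT.repr x = 0 := by
        ext p
        simp [hrep]
      exact bT.repr.map_eq_zero_iff.mp hz
    · -- degree 0 pairing
      intro j k hjk x hx y hy
      rw [hgr j] at hx
      rw [hgr k] at hy
      have h := bilin_span_mem t.form ⊥ ?_ x hx y hy
      · simpa using h
      · rintro _ ⟨p, hp, rfl⟩ _ ⟨q, hq, rfl⟩
        rw [Submodule.mem_bot, tformBB, if_neg]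
        rintro ⟨h1, h2⟩
        simp only [Set.mem_setOf_eq] at hp hq
        omega
    · -- i^k reality
      intro k x hx y hy
      rw [hgr (-k)] at hx
      rw [hgr k] at hy
      have h := bilin_span_mem t.form (Submodule.span ℝ {(Complex.I ^ k : ℂ)}) ?_ x hx y hy
      · obtain ⟨r, hr⟩ := Submodule.mem_span_singleton.mp h
        exact ⟨r, by rw [← hr, Complex.real_smul, mul_comm]⟩
      · rintro _ ⟨p, hp, rfl⟩ _ ⟨q, hq, rfl⟩
        rw [tformBB]
        split_ifs with hcond
        · obtain ⟨h1, h2⟩ := hcond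
          simp only [Set.mem_setOf_eq] at hp hq
          refine Submodule.mem_span_singleton.mpr ⟨(-1 : ℝ) ^ ((q.1 : ℕ) + (q.2 : ℕ)), ?_⟩
          have hk : k = 2 * (((q.1 : ℕ) + (q.2 : ℕ) : ℕ) : ℤ) - ((n : ℤ) + 1) := by
            push_cast
            omega
          have hIk : (Complex.I : ℂ) ^ k =
              ((-1 : ℂ)) ^ ((q.1 : ℕ) + (q.2 : ℕ)) * (-Complex.I) ^ (n + 1) := by
            rw [hk, zpow_sub₀ Complex.I_ne_zero]
            rw [show (2 * (((q.1 : ℕ) + (q.2 : ℕ) : ℕ) : ℤ)) =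
              ((2 * ((q.1 : ℕ) + (q.2 : ℕ)) : ℕ) : ℤ) by push_cast; ring, zpow_natCast]
            rw [show ((n : ℤ) + 1) = ((n + 1 : ℕ) : ℤ) by push_cast; ring, zpow_natCast]
            rw [pow_mul, Complex.I_sq]
            rw [div_eq_mul_inv, ← inv_pow, Complex.inv_I]
          rw [Complex.real_smul, hIk]
          push_cast
          rw [← mul_assoc, ← mul_pow]
          norm_num
        · exact Submodule.zero_mem _
    · -- Lefschetz degree
      intro k x hx
      rw [hgr k] at hx
      have hle : Submodule.span ℝ (⇑bT '' {p : Fin (n + 1) × Fin 2 |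
          2 * ((p.1 : ℕ) : ℤ) + 2 * ((p.2 : ℕ) : ℤ) - (n + 1) = k}) ≤
          Submodule.comap t.lef (t.grading (k + 2)) := by
        refine Submodule.span_le.mpr ?_
        rintro _ ⟨p, hp, rfl⟩
        simp only [SetLike.mem_coe, Submodule.mem_comap]
        rw [hBT p, tlefEF]
        simp only [Set.mem_setOf_eq] at hp
        exact Submodule.add_mem _ (mem_tg _ _ _ (by push_cast; omega))
          (mem_tg _ _ _ (by push_cast; omega))
      exact hle hx
    · -- self-adjointness
      intro x y
      induction x using TensorProduct.induction_on with
      | zero => simp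
      | tmul p q =>
          induction y using TensorProduct.induction_on with
          | zero => simp
          | tmul p' q' =>
              simp only [htl, map_add, LinearMap.add_apply, htf]
              rw [haSA, hbSA]
          | add y₁ y₂ h1 h2 => simp only [map_add, LinearMap.add_apply, h1, h2]
      | add x₁ x₂ h1 h2 => simp only [map_add, LinearMap.add_apply, h1, h2]
  have hIpow : ∀ m : ℕ, (Complex.I) ^ m * (-Complex.I) ^ m = 1 := by
    intro m
    rw [← mul_pow, mul_neg, Complex.I_mul_I, neg_neg, one_pow]
  have hpos : ∀ k : ℕ, ∀ x ∈ t.grading (-(k : ℤ)), (t.lef ^ (k + 1)) x = 0 → x ≠ 0 →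
      ∃ r : ℝ, 0 < r ∧ Complex.I ^ (k : ℕ) * t.form x ((t.lef ^ k) x) = (r : ℂ) := by
    intro k x hx hprim hxne
    rw [hgr] at hx
    by_cases hks : k ≤ n + 1 ∧ (n + 1 - k) % 2 = 0
    · obtain ⟨hk1, hk2⟩ := hks
      obtain ⟨q, hq⟩ : ∃ q, n + 1 = k + 2 * q := ⟨(n + 1 - k) / 2, by omega⟩
      rcases q with _ | q'
      · -- k = n + 1, x is a multiple of Uc 0
        have hkn : k = n + 1 := by omega
        have hxmem : x ∈ Submodule.span ℝ {Uc 0} := by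
          refine Submodule.span_le.mpr ?_ hx
          rintro _ ⟨p, hp, rfl⟩
          simp only [Set.mem_setOf_eq] at hp
          have h1 := p.1.isLt
          have h2 := p.2.isLt
          have hp1 : (p.1 : ℕ) = 0 := by omega
          have hp2 : (p.2 : ℕ) = 0 := by omega
          rw [hBT p, hp1, hp2, hE00U]
          exact Submodule.smul_mem _ _ (Submodule.mem_span_singleton_self _)
        obtain ⟨α, hα⟩ := Submodule.mem_span_singleton.mp hxmem
        have hα0 : α ≠ 0 := fun h => hxne (by rw [← hα, h, zero_smul])
        refine ⟨α * α, mul_self_pos.mpr hα0, ?_⟩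
        have hf : t.form (Uc 0) (Uc k) = (-Complex.I) ^ (n + 1) := by
          rw [formUU, if_pos (by omega)]
        rw [← hα]
        simp only [map_smul, LinearMap.smul_apply, powU, Nat.zero_add, hf, Complex.real_smul]
        rw [hkn]
        push_cast
        linear_combination (α : ℂ) * (α : ℂ) * hIpow (n + 1)
      · -- x = α • Uc (q'+1) + β • Vc q'
        have hxmem : x ∈ Submodule.span ℝ {Uc (q' + 1), Vc q'} := by
          refine Submodule.span_le.mpr ?_ hx
          rintro _ ⟨p, hp, rfl⟩
          simp only [Set.mem_setOf_eq] at hp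
          have h1 := p.1.isLt
          have h2 := p.2.isLt
          rcases (show (p.2 : ℕ) = 0 ∧ (p.1 : ℕ) = q' + 1 ∨ (p.2 : ℕ) = 1 ∧ (p.1 : ℕ) = q'
            by omega) with ⟨ha', hb'⟩ | ⟨ha', hb'⟩
          · rw [hBT p, ha', hb']
            exact (hsolve q').1
          · rw [hBT p, ha', hb']
            exact (hsolve q').2
        obtain ⟨α, β, hαβ⟩ := Submodule.mem_span_pair.mp hxmem
        have heq : α • Uc (q' + 1 + (k + 1)) + β • Vc (q' + (k + 1)) = 0 := by
          rw [← powU, ← powV, ← map_smul, ← map_smul, ← map_add, hαβ, hprim]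
        have hα0 : α = 0 := by
          have hf1 : t.form (Uc (q' + 1 + (k + 1))) (Uc q') = (-Complex.I) ^ (n + 1) := by
            rw [formUU, if_pos (by omega)]
          have hf2 : t.form (Vc (q' + (k + 1))) (Uc q') = 0 := formVU _ _
          have h2 := congrArg (fun z => t.form z (Uc q')) heq
          simp only [map_add, LinearMap.add_apply, map_smul, LinearMap.smul_apply, hf1, hf2,
            smul_zero, add_zero, mul_zero, zero_add, map_zero, LinearMap.zero_apply,
            Complex.real_smul] at h2
          rcases mul_eq_zero.mp h2 with h' | h'
          · exact_mod_cast h'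
          · exact absurd h' hmi
        by_cases hkn : k = n - 1
        · have hq0 : q' = 0 := by omega
          have hx2 : x = β • Vc 0 := by rw [← hαβ, hα0, zero_smul, zero_add, hq0]
          have hβ0 : β ≠ 0 := fun h => hxne (by rw [hx2, h, zero_smul])
          refine ⟨β * β, mul_self_pos.mpr hβ0, ?_⟩
          have hf : t.form (Vc 0) (Vc k) = (-Complex.I) ^ (n - 1) := by
            rw [formVV, if_pos (by omega)]
          rw [hx2]
          simp only [map_smul, LinearMap.smul_apply, powV, Nat.zero_add, hf, Complex.real_smul]
          rw [hkn]
          push_cast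
          linear_combination (β : ℂ) * (β : ℂ) * hIpow (n - 1)
        · have hβ0 : β = 0 := by
            have hf1 : t.form (Uc (q' + 1 + (k + 1))) (Vc (n - 1 - (q' + (k + 1)))) = 0 :=
              formUV _ _
            have hf2 : t.form (Vc (q' + (k + 1))) (Vc (n - 1 - (q' + (k + 1)))) =
                (-Complex.I) ^ (n - 1) := by
              rw [formVV, if_pos (by omega)]
            have h2 := congrArg (fun z => t.form z (Vc (n - 1 - (q' + (k + 1))))) heq
            simp only [map_add, LinearMap.add_apply, map_smul, LinearMap.smul_apply, hf1, hf2,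
              smul_zero, add_zero, mul_zero, zero_add, map_zero, LinearMap.zero_apply,
              Complex.real_smul] at h2
            rcases mul_eq_zero.mp h2 with h' | h'
            · exact_mod_cast h'
            · exact absurd h' hmi'
          exact absurd (by rw [← hαβ, hα0, hβ0, zero_smul, zero_smul, zero_add]) hxne
    · exfalso
      have hemp : {p : Fin (n + 1) × Fin 2 |
          2 * ((p.1 : ℕ) : ℤ) + 2 * ((p.2 : ℕ) : ℤ) - (n + 1) = -(k : ℤ)} = ∅ := by
        ext p
        simp only [Set.mem_setOf_eq, Set.mem_empty_iff_false, iff_false]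
        intro hp
        have h1 := p.1.isLt
        have h2 := p.2.isLt
        omega
      rw [hemp] at hx
      simp only [Set.image_empty, Submodule.span_empty, Submodule.mem_bot] at hx
      exact hxne hx
  exact ⟨⟨hdatum, hpos⟩, U, U', hcompl, elemU, elemV, horth⟩
end
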